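/- arXiv:1401.1117 — 3 statements merged into one kernel-verified Lean document; each statement's English description precedes it below -/
import Mathlib

section
/- Let m ≥ 2 and let L be a matrix over F_2 whose columns are indexed by the edge multiset E^{(n)} of n copies of each edge of K_m. Let ξ be uniform on F_2^{E^{(n)}}, X_i^n the bits on edges incident with i, L = Lξ the corresponding random vector, and define I(X_M^n | L) = H(X_M^n | L) − (1/(m−1)) Σ_{i=1}^m H(X_{M\setminus\{i\}}^n | X_i^n, L). Then I(X_M^n | L) = nm/2 − rank(L) + (1/(m−1)) Σ_{i=1}^m rank(L|_{E_i^c}), where E_i^c is the set of edges not incident with i. -/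
open Finset Real

noncomputable def probOf {Ω : Type*} [Fintype Ω] (p : Ω → ℝ) {α : Type*} [DecidableEq α]
    (X : Ω → α) (a : α) : ℝ :=
  ∑ ω ∈ Finset.univ.filter (fun ω => X ω = a), p ω

/-- Shannon entropy (in bits). -/
noncomputable def shannonH {Ω : Type*} [Fintype Ω] (p : Ω → ℝ) {α : Type*} [Fintype α]
    [DecidableEq α] (X : Ω → α) : ℝ :=
  - ∑ a : α, probOf p X a * Real.logb 2 (probOf p X a)

/-- Conditional Shannon entropy `H(X | Y) = H(X, Y) - H(Y)` (in bits). -/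
noncomputable def condH {Ω : Type*} [Fintype Ω] (p : Ω → ℝ) {α β : Type*} [Fintype α]
    [DecidableEq α] [Fintype β] [DecidableEq β] (X : Ω → α) (Y : Ω → β) : ℝ :=
  shannonH p (fun ω => (X ω, Y ω)) - shannonH p Y

/-- The edge multiset `E⁽ⁿ⁾` of the multigraph consisting of `n` copies of each
edge of the complete graph `K_m`. -/
def EdgeIdx (m n : ℕ) : Type := Fin n × {e : Sym2 (Fin m) // ¬ e.IsDiag}

instance (m n : ℕ) : Fintype (EdgeIdx m n) := instFintypeProd _ _
instance (m n : ℕ) : DecidableEq (EdgeIdx m n) := instDecidableEqProd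

/-- The sample space of the PIN model: an i.i.d. uniform `F₂`-valued bit `ξ_e` for
each edge `e` of the multigraph. -/
def PinOmega (m n : ℕ) : Type := EdgeIdx m n → ZMod 2

instance (m n : ℕ) : Fintype (PinOmega m n) := Pi.instFintype
instance (m n : ℕ) : DecidableEq (PinOmega m n) := Fintype.decidablePiFintype

/-- The uniform pmf on the PIN sample space. -/
noncomputable def pinUnif (m n : ℕ) : PinOmega m n → ℝ :=
  fun _ => (Fintype.card (PinOmega m n) : ℝ)⁻¹

/-- The observation `X_i^n` of terminal `i`: the bits on the edges incident with `i`. -/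
def pinX (m n : ℕ) (i : Fin m) (ω : PinOmega m n) :
    {e : EdgeIdx m n // i ∈ (e.2.1 : Sym2 (Fin m))} → ZMod 2 :=
  fun e => ω e.1

/-- The full observation `X_M^n = (X_1^n, …, X_m^n)`. -/
def pinXM (m n : ℕ) (ω : PinOmega m n) :
    (i : Fin m) → ({e : EdgeIdx m n // i ∈ (e.2.1 : Sym2 (Fin m))} → ZMod 2) :=
  fun i => pinX m n i ω

/-- The observations `X_{M∖{i}}^n` of all terminals other than `i`. -/
def pinXRest (m n : ℕ) (i : Fin m) (ω : PinOmega m n) :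
    (j : {j : Fin m // j ≠ i}) →
      ({e : EdgeIdx m n // (j : Fin m) ∈ (e.2.1 : Sym2 (Fin m))} → ZMod 2) :=
  fun j => pinX m n j.1 ω

/-! ### Auxiliary machinery -/

section EntropyCore

lemma card_module' (W : Type*) [AddCommGroup W] [Module (ZMod 2) W] [Fintype W] :
    Fintype.card W = 2 ^ Module.finrank (ZMod 2) W := by
  rw [Module.card_eq_pow_finrank (K := ZMod 2), ZMod.card]

set_option linter.unusedSectionVars false

variable {Ω V : Type*} [Fintype Ω] [AddCommGroup Ω] [Module (ZMod 2) Ω]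
  [Fintype V] [DecidableEq V] [AddCommGroup V] [Module (ZMod 2) V]

lemma probOf_eq_card' (f : Ω → V) (a : V) :
    probOf (fun _ => (Fintype.card Ω : ℝ)⁻¹) f a
      = (Fintype.card {ω : Ω // f ω = a} : ℝ) / Fintype.card Ω := by
  classical
  rw [probOf, Finset.sum_const, nsmul_eq_mul, ← Fintype.card_subtype, div_eq_mul_inv]

lemma card_fiber_mem' (f : Ω →ₗ[ZMod 2] V) {a : V} (h : a ∈ LinearMap.range f) :
    Fintype.card {ω : Ω // f ω = a} = 2 ^ Module.finrank (ZMod 2) (LinearMap.ker f) := by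
  classical
  obtain ⟨x0, hx0⟩ := h
  rw [← card_module' (LinearMap.ker f)]
  exact Fintype.card_congr
    { toFun := fun ω => ⟨ω.1 - x0, by simp [LinearMap.mem_ker, map_sub, ω.2, hx0]⟩
      invFun := fun ω => ⟨ω.1 + x0, by
        have := ω.2
        rw [LinearMap.mem_ker] at this
        simp [map_add, this, hx0]⟩
      left_inv := fun ω => by simp
      right_inv := fun ω => by simp }

lemma card_fiber_not_mem' (f : Ω →ₗ[ZMod 2] V) {a : V} (h : a ∉ LinearMap.range f) :
    Fintype.card {ω : Ω // f ω = a} = 0 := by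
  classical
  rw [Fintype.card_eq_zero_iff]
  exact ⟨fun ω => h ⟨ω.1, ω.2⟩⟩

/-- Entropy of a linear image of the uniform distribution is the rank. -/
lemma shannonH_linear (f : Ω →ₗ[ZMod 2] V) :
    shannonH (fun _ => (Fintype.card Ω : ℝ)⁻¹) (⇑f)
      = (Module.finrank (ZMod 2) (LinearMap.range f) : ℝ) := by
  classical
  have hfd : FiniteDimensional (ZMod 2) Ω := Module.Finite.of_finite
  set dk := Module.finrank (ZMod 2) (LinearMap.ker f) with hdk
  set dr := Module.finrank (ZMod 2) (LinearMap.range f) with hdr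
  have hrn : dr + dk = Module.finrank (ZMod 2) Ω := LinearMap.finrank_range_add_finrank_ker f
  have hN : (Fintype.card Ω : ℝ) = 2 ^ (dr + dk) := by
    rw [hrn, card_module' Ω]; push_cast; ring
  have hNpos : (0:ℝ) < Fintype.card Ω := by positivity
  have key : ∀ a : V, probOf (fun _ => (Fintype.card Ω : ℝ)⁻¹) (⇑f) a
      * Real.logb 2 (probOf (fun _ => (Fintype.card Ω : ℝ)⁻¹) (⇑f) a)
      = if a ∈ LinearMap.range f then
          ((2:ℝ)^dk / Fintype.card Ω) * Real.logb 2 ((2:ℝ)^dk / Fintype.card Ω) else 0 := by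
    intro a
    by_cases h : a ∈ LinearMap.range f
    · rw [if_pos h, probOf_eq_card', card_fiber_mem' f h, ← hdk]
      push_cast; ring_nf
    · rw [if_neg h, probOf_eq_card', card_fiber_not_mem' f h]
      simp
  rw [shannonH]
  rw [Finset.sum_congr rfl (fun a _ => key a), Finset.sum_ite, Finset.sum_const_zero, add_zero,
    Finset.sum_const, nsmul_eq_mul]
  have hnat : Nat.card (LinearMap.range f) = 2 ^ dr := by
    rw [Nat.card_eq_fintype_card, card_module', hdr]
  have hcardfil : ((Finset.univ.filter (fun a => a ∈ LinearMap.range f)).card : ℝ) = 2 ^ dr := by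
    rw [← Fintype.card_subtype, Fintype.card_eq_nat_card]
    exact_mod_cast hnat
  rw [hcardfil, hN]
  have h2 : ((2:ℝ)^dk) / ((2:ℝ)^(dr+dk)) = ((2:ℝ)^dr)⁻¹ := by
    rw [pow_add]; field_simp
  rw [h2, Real.logb_inv, Real.logb_pow, Real.logb_self_eq_one (by norm_num)]
  field_simp

end EntropyCore

/-! ### Linear structure on the PIN sample space -/

instance (m n : ℕ) : AddCommGroup (PinOmega m n) := Pi.addCommGroup
instance (m n : ℕ) : Module (ZMod 2) (PinOmega m n) := Pi.module _ _ _

def pinEquiv (m n : ℕ) : PinOmega m n ≃ₗ[ZMod 2] (EdgeIdx m n → ZMod 2) where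
  toFun := id
  invFun := id
  map_add' _ _ := rfl
  map_smul' _ _ := rfl
  left_inv _ := rfl
  right_inv _ := rfl

lemma finrank_pinOmega (m n : ℕ) :
    Module.finrank (ZMod 2) (PinOmega m n) = Fintype.card (EdgeIdx m n) := by
  rw [(pinEquiv m n).finrank_eq, Module.finrank_fintype_fun_eq_card]

def pinXMLin (m n : ℕ) : PinOmega m n →ₗ[ZMod 2]
    ((i : Fin m) → ({e : EdgeIdx m n // i ∈ (e.2.1 : Sym2 (Fin m))} → ZMod 2)) where
  toFun := pinXM m n
  map_add' _ _ := rfl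
  map_smul' _ _ := rfl

def pinXLin (m n : ℕ) (i : Fin m) : PinOmega m n →ₗ[ZMod 2]
    ({e : EdgeIdx m n // i ∈ (e.2.1 : Sym2 (Fin m))} → ZMod 2) where
  toFun := pinX m n i
  map_add' _ _ := rfl
  map_smul' _ _ := rfl

def pinXRestLin (m n : ℕ) (i : Fin m) : PinOmega m n →ₗ[ZMod 2]
    ((j : {j : Fin m // j ≠ i}) →
      ({e : EdgeIdx m n // (j : Fin m) ∈ (e.2.1 : Sym2 (Fin m))} → ZMod 2)) where
  toFun := pinXRest m n i
  map_add' _ _ := rfl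
  map_smul' _ _ := rfl

def mulVecL {m n q : ℕ} (L : Matrix (Fin q) (EdgeIdx m n) (ZMod 2)) :
    PinOmega m n →ₗ[ZMod 2] (Fin q → ZMod 2) where
  toFun ω := L.mulVec ω
  map_add' x y := Matrix.mulVec_add L x y
  map_smul' c x := Matrix.mulVec_smul L c x

lemma finrank_range_mulVecL {m n q : ℕ} (L : Matrix (Fin q) (EdgeIdx m n) (ZMod 2)) :
    Module.finrank (ZMod 2) (LinearMap.range (mulVecL L)) = L.rank := by
  rw [Matrix.rank]
  congr 1

/-! ### Injectivity of the full observations -/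

lemma pinXM_injective (m n : ℕ) : Function.Injective (pinXM m n) := by
  intro ω ω' h
  funext e
  have hi : e.2.1.out.1 ∈ (e.2.1 : Sym2 (Fin m)) := Sym2.out_fst_mem _
  exact congrFun (congrFun h e.2.1.out.1) ⟨e, hi⟩

lemma pin_joint_injective (m n : ℕ) (i : Fin m) :
    Function.Injective (fun ω : PinOmega m n => (pinXRest m n i ω, pinX m n i ω)) := by
  intro ω ω' h
  have h1 := congrArg Prod.fst h
  have h2 := congrArg Prod.snd h
  simp only at h1 h2
  funext e
  by_cases hi : i ∈ (e.2.1 : Sym2 (Fin m))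
  · exact congrFun h2 ⟨e, hi⟩
  · have hj : e.2.1.out.1 ∈ (e.2.1 : Sym2 (Fin m)) := Sym2.out_fst_mem _
    have hne : e.2.1.out.1 ≠ i := fun hc => hi (hc ▸ hj)
    exact congrFun (congrFun h1 ⟨_, hne⟩) ⟨e, hj⟩

/-! ### The kernel computation for the `i`-th terms -/

def extLin (m n : ℕ) (i : Fin m) :
    ({e : EdgeIdx m n // i ∉ (e.2.1 : Sym2 (Fin m))} → ZMod 2) →ₗ[ZMod 2] PinOmega m n where
  toFun x := fun e => if h : i ∈ (e.2.1 : Sym2 (Fin m)) then 0 else x ⟨e, h⟩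
  map_add' x y := by
    funext e
    show (if h : i ∈ (e.2.1 : Sym2 (Fin m)) then 0 else (x + y) ⟨e, h⟩)
      = (if h : i ∈ (e.2.1 : Sym2 (Fin m)) then 0 else x ⟨e, h⟩)
        + (if h : i ∈ (e.2.1 : Sym2 (Fin m)) then 0 else y ⟨e, h⟩)
    by_cases h : i ∈ (e.2.1 : Sym2 (Fin m)) <;> simp [h]
  map_smul' c x := by
    funext e
    show (if h : i ∈ (e.2.1 : Sym2 (Fin m)) then 0 else (c • x) ⟨e, h⟩)
      = c • (if h : i ∈ (e.2.1 : Sym2 (Fin m)) then 0 else x ⟨e, h⟩)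
    by_cases h : i ∈ (e.2.1 : Sym2 (Fin m)) <;> simp [h]

lemma mulVec_split {m n q : ℕ} (L : Matrix (Fin q) (EdgeIdx m n) (ZMod 2)) (i : Fin m)
    (v : PinOmega m n) (r : Fin q) :
    L.mulVec v r = (∑ e : {e : EdgeIdx m n // i ∈ (e.2.1 : Sym2 (Fin m))}, L r e.1 * v e.1)
      + ∑ e : {e : EdgeIdx m n // i ∉ (e.2.1 : Sym2 (Fin m))}, L r e.1 * v e.1 := by
  classical
  rw [Fintype.sum_subtype_add_sum_subtype (fun e : EdgeIdx m n => i ∈ (e.2.1 : Sym2 (Fin m)))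
    (fun e => L r e * v e)]
  simp [Matrix.mulVec, dotProduct]

lemma mulVec_extLin {m n q : ℕ} (L : Matrix (Fin q) (EdgeIdx m n) (ZMod 2)) (i : Fin m)
    (x : {e : EdgeIdx m n // i ∉ (e.2.1 : Sym2 (Fin m))} → ZMod 2) :
    L.mulVec (extLin m n i x)
      = (L.submatrix id (fun e : {e : EdgeIdx m n // i ∉ (e.2.1 : Sym2 (Fin m))} => e.1)).mulVec x := by
  funext r
  rw [mulVec_split L i _ r]
  have h1 : (∑ e : {e : EdgeIdx m n // i ∈ (e.2.1 : Sym2 (Fin m))},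
      L r e.1 * extLin m n i x e.1) = 0 := by
    refine Finset.sum_eq_zero fun e _ => ?_
    have : extLin m n i x e.1 = 0 := dif_pos e.2
    rw [this, mul_zero]
  rw [h1, zero_add]
  simp only [Matrix.mulVec, dotProduct, Matrix.submatrix_apply, id_eq]
  refine Finset.sum_congr rfl fun e _ => ?_
  have : extLin m n i x e.1 = x e := dif_neg e.2
  rw [this]

lemma mulVec_of_pinX_eq_zero {m n q : ℕ} (L : Matrix (Fin q) (EdgeIdx m n) (ZMod 2)) (i : Fin m)
    (ω : PinOmega m n) (hω : pinX m n i ω = 0) :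
    L.mulVec ω
      = (L.submatrix id (fun e : {e : EdgeIdx m n // i ∉ (e.2.1 : Sym2 (Fin m))} => e.1)).mulVec
          (fun e => ω e.1) := by
  funext r
  rw [mulVec_split L i ω r]
  have h1 : (∑ e : {e : EdgeIdx m n // i ∈ (e.2.1 : Sym2 (Fin m))}, L r e.1 * ω e.1) = 0 := by
    refine Finset.sum_eq_zero fun e _ => ?_
    have : ω e.1 = 0 := congrFun hω e
    rw [this, mul_zero]
  rw [h1, zero_add]
  simp [Matrix.mulVec, dotProduct, Matrix.submatrix_apply]

lemma finrank_ker_eq (m n q : ℕ) (L : Matrix (Fin q) (EdgeIdx m n) (ZMod 2)) (i : Fin m) :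
    Module.finrank (ZMod 2) (LinearMap.ker ((pinXLin m n i).prod (mulVecL L)))
      = Module.finrank (ZMod 2) (LinearMap.ker
          (Matrix.mulVecLin
            (L.submatrix id (fun e : {e : EdgeIdx m n // i ∉ (e.2.1 : Sym2 (Fin m))} => e.1)))) := by
  have hmem : ∀ x ∈ LinearMap.ker (Matrix.mulVecLin
      (L.submatrix id (fun e : {e : EdgeIdx m n // i ∉ (e.2.1 : Sym2 (Fin m))} => e.1))),
      extLin m n i x ∈ LinearMap.ker ((pinXLin m n i).prod (mulVecL L)) := by
    intro x hx
    rw [LinearMap.mem_ker, Matrix.mulVecLin_apply] at hx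
    rw [LinearMap.mem_ker, LinearMap.prod_apply]
    have hfst : pinXLin m n i (extLin m n i x) = 0 := funext fun e => dif_pos e.2
    have hsnd : mulVecL L (extLin m n i x) = 0 := by
      show L.mulVec (extLin m n i x) = 0
      rw [mulVec_extLin, hx]
    exact Prod.ext hfst hsnd
  set F := (extLin m n i).restrict hmem with hF
  have hinj : Function.Injective F := by
    intro a b hab
    have h1 : extLin m n i a.1 = extLin m n i b.1 := congrArg Subtype.val hab
    ext e
    have := congrFun h1 e.1
    rwa [show extLin m n i a.1 e.1 = a.1 e from dif_neg e.2,
      show extLin m n i b.1 e.1 = b.1 e from dif_neg e.2] at this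
  have hsurj : Function.Surjective F := by
    intro ω
    have hmemω := ω.2
    rw [LinearMap.mem_ker, LinearMap.prod_apply] at hmemω
    have h1 : pinXLin m n i ω.1 = 0 := congrArg Prod.fst hmemω
    have h2 : mulVecL L ω.1 = 0 := congrArg Prod.snd hmemω
    refine ⟨⟨fun e => ω.1 e.1, ?_⟩, ?_⟩
    · rw [LinearMap.mem_ker, Matrix.mulVecLin_apply, ← mulVec_of_pinX_eq_zero L i ω.1 h1]
      exact h2
    · apply Subtype.ext
      show extLin m n i (fun e => ω.1 e.1) = ω.1
      funext e
      by_cases h : i ∈ (e.2.1 : Sym2 (Fin m))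
      · rw [show extLin m n i (fun e' => ω.1 e'.1) e = 0 from dif_pos h]
        exact (congrFun h1 ⟨e, h⟩).symm
      · exact dif_neg h
  exact (LinearEquiv.ofBijective F ⟨hinj, hsurj⟩).finrank_eq.symm

/-! ### Counting lemmas -/

lemma card_edgeIdx (m n : ℕ) :
    2 * Fintype.card (EdgeIdx m n) = n * (m * (m - 1)) := by
  have h1 : Fintype.card (EdgeIdx m n) = n * Nat.choose m 2 := by
    rw [show Fintype.card (EdgeIdx m n) = Fintype.card (Fin n)
        * Fintype.card {e : Sym2 (Fin m) // ¬ e.IsDiag} from Fintype.card_prod _ _,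
      Fintype.card_fin, Sym2.card_subtype_not_diag, Fintype.card_fin]
  have h2 : 2 * Nat.choose m 2 = m * (m - 1) := by
    cases m with
    | zero => simp
    | succ k =>
      rw [Nat.choose_two_right, Nat.succ_sub_one]
      have he : 2 ∣ (k + 1) * k := by
        rcases Nat.even_or_odd k with hk | hk
        · exact Dvd.dvd.mul_left hk.two_dvd _
        · exact Dvd.dvd.mul_right (Odd.add_one hk).two_dvd _
      omega
  rw [h1, ← h2]; ring

lemma card_mem_sym2 {m : ℕ} (z : Sym2 (Fin m)) (hz : ¬ z.IsDiag) :
    (Finset.univ.filter (fun i : Fin m => i ∈ z)).card = 2 := by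
  induction z using Sym2.ind with
  | _ a b =>
    have hab : a ≠ b := by simpa [Sym2.mk_isDiag_iff] using hz
    have : Finset.univ.filter (fun i : Fin m => i ∈ s(a, b)) = {a, b} := by
      ext i
      simp [Sym2.mem_iff]
    rw [this, Finset.card_insert_of_notMem (by simpa using hab), Finset.card_singleton]

lemma sum_card_compl (m n : ℕ) :
    (∑ i : Fin m, Fintype.card {e : EdgeIdx m n // i ∉ (e.2.1 : Sym2 (Fin m))})
      = (m - 2) * Fintype.card (EdgeIdx m n) := by
  classical
  have h1 : ∀ i : Fin m, Fintype.card {e : EdgeIdx m n // i ∉ (e.2.1 : Sym2 (Fin m))}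
      = ∑ e : EdgeIdx m n, if i ∈ (e.2.1 : Sym2 (Fin m)) then 0 else 1 := by
    intro i
    rw [Fintype.card_subtype, Finset.card_filter]
    exact Finset.sum_congr rfl fun e _ => by by_cases h : i ∈ (e.2.1 : Sym2 (Fin m)) <;> simp [h]
  rw [Finset.sum_congr rfl fun i _ => h1 i, Finset.sum_comm]
  have h2 : ∀ e : EdgeIdx m n,
      (∑ i : Fin m, if i ∈ (e.2.1 : Sym2 (Fin m)) then 0 else 1) = m - 2 := by
    intro e
    rw [Finset.sum_ite, Finset.sum_const, Finset.sum_const, smul_zero, zero_add, smul_eq_mul,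
      mul_one]
    have hmem := card_mem_sym2 e.2.1 e.2.2
    have : (Finset.univ.filter (fun i : Fin m => ¬ i ∈ (e.2.1 : Sym2 (Fin m)))).card
        = m - 2 := by
      rw [Finset.filter_not, Finset.card_sdiff_of_subset (Finset.filter_subset _ _), hmem,
        Finset.card_univ, Fintype.card_fin]
    simpa using this
  rw [Finset.sum_congr rfl fun e _ => h2 e, Finset.sum_const, Finset.card_univ, smul_eq_mul,
    mul_comm]

instance tripleDecEq (m n q : ℕ) (i : Fin m) :
    DecidableEq (((j : {j : Fin m // j ≠ i}) →
        ({e : EdgeIdx m n // (j : Fin m) ∈ (e.2.1 : Sym2 (Fin m))} → ZMod 2))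
      × (({e : EdgeIdx m n // i ∈ (e.2.1 : Sym2 (Fin m))} → ZMod 2) × (Fin q → ZMod 2))) :=
  instDecidableEqProd
theorem stmt_12 (m n q : ℕ) (hm : 2 ≤ m)
    (L : Matrix (Fin q) (EdgeIdx m n) (ZMod 2)) :
    condH (pinUnif m n) (pinXM m n) (fun ω => L.mulVec ω) -
      (1 / (m - 1)) * ∑ i : Fin m,
        condH (pinUnif m n) (pinXRest m n i)
          (fun ω => (pinX m n i ω, L.mulVec ω))
    = n * m / 2 - (L.rank : ℝ) +
        (1 / (m - 1)) * ∑ i : Fin m,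
          ((L.submatrix id
            (fun e : {e : EdgeIdx m n // i ∉ (e.2.1 : Sym2 (Fin m))} => e.1)).rank : ℝ) := by
  have hfd : FiniteDimensional (ZMod 2) (PinOmega m n) := Module.Finite.of_finite
  have hm1 : (2:ℝ) ≤ (m:ℝ) := by exact_mod_cast hm
  have hm0 : (m:ℝ) - 1 ≠ 0 := by linarith
  set E := Fintype.card (EdgeIdx m n) with hE
  set c : Fin m → ℕ :=
    fun i => Fintype.card {e : EdgeIdx m n // i ∉ (e.2.1 : Sym2 (Fin m))} with hc
  set k : Fin m → ℕ :=
    fun i => Module.finrank (ZMod 2) (LinearMap.ker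
      (Matrix.mulVecLin
        (L.submatrix id (fun e : {e : EdgeIdx m n // i ∉ (e.2.1 : Sym2 (Fin m))} => e.1)))) with hk
  have hpu : pinUnif m n = fun _ => (Fintype.card (PinOmega m n) : ℝ)⁻¹ := rfl
  -- entropy of the full observation paired with the linear function
  have h1 : shannonH (pinUnif m n) (fun ω => (pinXM m n ω, L.mulVec ω)) = (E : ℝ) := by
    have hfun : (fun ω => (pinXM m n ω, L.mulVec ω))
        = ⇑((pinXMLin m n).prod (mulVecL L)) := rfl
    have hinj : Function.Injective ((pinXMLin m n).prod (mulVecL L)) := by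
      intro a b hab
      exact pinXM_injective m n (congrArg Prod.fst hab)
    rw [hpu, hfun, shannonH_linear, LinearMap.finrank_range_of_inj hinj, finrank_pinOmega]
  -- entropy of the linear function
  have h2 : shannonH (pinUnif m n) (fun ω => L.mulVec ω) = (L.rank : ℝ) := by
    have hfun : (fun ω : PinOmega m n => L.mulVec ω) = ⇑(mulVecL L) := rfl
    rw [hpu, hfun, shannonH_linear, finrank_range_mulVecL]
  -- entropy of the i-th joint observation
  have h3 : ∀ i : Fin m, shannonH (pinUnif m n)
      (fun ω => (pinXRest m n i ω, (pinX m n i ω, L.mulVec ω))) = (E : ℝ) := by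
    intro i
    have hfun : (fun ω => (pinXRest m n i ω, (pinX m n i ω, L.mulVec ω)))
        = ⇑((pinXRestLin m n i).prod ((pinXLin m n i).prod (mulVecL L))) := rfl
    have hinj : Function.Injective
        ((pinXRestLin m n i).prod ((pinXLin m n i).prod (mulVecL L))) := by
      intro a b hab
      have hr : pinXRest m n i a = pinXRest m n i b := congrArg Prod.fst hab
      have hx : pinX m n i a = pinX m n i b := congrArg (fun z => z.2.1) hab
      exact pin_joint_injective m n i (Prod.ext hr hx)
    rw [hpu, hfun, shannonH_linear, LinearMap.finrank_range_of_inj hinj, finrank_pinOmega]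
  -- entropy of (X_i, Lξ)
  have h4 : ∀ i : Fin m, shannonH (pinUnif m n)
      (fun ω => (pinX m n i ω, L.mulVec ω)) = (E : ℝ) - (k i : ℝ) := by
    intro i
    have hfun : (fun ω => (pinX m n i ω, L.mulVec ω))
        = ⇑((pinXLin m n i).prod (mulVecL L)) := rfl
    rw [hpu, hfun, shannonH_linear]
    have hrn : Module.finrank (ZMod 2)
          (LinearMap.range ((pinXLin m n i).prod (mulVecL L)))
        + Module.finrank (ZMod 2)
          (LinearMap.ker ((pinXLin m n i).prod (mulVecL L))) = E := by
      rw [LinearMap.finrank_range_add_finrank_ker, finrank_pinOmega]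
    rw [finrank_ker_eq m n q L i] at hrn
    have := congrArg (fun x : ℕ => (x : ℝ)) hrn
    simp only [hk]
    push_cast at this ⊢
    linarith
  -- rank-nullity for the submatrices
  have h5 : ∀ i : Fin m,
      ((L.submatrix id
        (fun e : {e : EdgeIdx m n // i ∉ (e.2.1 : Sym2 (Fin m))} => e.1)).rank : ℝ)
        = (c i : ℝ) - (k i : ℝ) := by
    intro i
    have hrn : (L.submatrix id
          (fun e : {e : EdgeIdx m n // i ∉ (e.2.1 : Sym2 (Fin m))} => e.1)).rank + k i = c i := by
      rw [Matrix.rank, hk, hc, LinearMap.finrank_range_add_finrank_ker,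
        Module.finrank_fintype_fun_eq_card]
    have := congrArg (fun x : ℕ => (x : ℝ)) hrn
    push_cast at this ⊢
    linarith
  -- the two condH computations
  have hA : condH (pinUnif m n) (pinXM m n) (fun ω => L.mulVec ω)
      = (E : ℝ) - (L.rank : ℝ) := by
    simp only [condH]
    rw [h1, h2]
  have hB : ∀ i : Fin m, condH (pinUnif m n) (pinXRest m n i)
      (fun ω => (pinX m n i ω, L.mulVec ω)) = (k i : ℝ) := by
    intro i
    simp only [condH]
    rw [h3 i, h4 i]
    ring
  rw [hA, Finset.sum_congr rfl (fun i _ => hB i),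
    Finset.sum_congr rfl (fun i _ => h5 i)]
  -- counting facts, in ℝ
  have hcast1 : ((m - 1 : ℕ) : ℝ) = (m : ℝ) - 1 := by
    have : 1 ≤ m := by omega
    push_cast [this]; ring
  have hcast2 : ((m - 2 : ℕ) : ℝ) = (m : ℝ) - 2 := by
    push_cast [hm]; ring
  have hE2 : 2 * (E : ℝ) = n * m * ((m : ℝ) - 1) := by
    have := congrArg (fun x : ℕ => (x : ℝ)) (card_edgeIdx m n)
    push_cast [hcast1] at this
    rw [hE]
    linarith
  have hSc : (∑ i : Fin m, (c i : ℝ)) = ((m : ℝ) - 2) * (E : ℝ) := by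
    have := congrArg (fun x : ℕ => (x : ℝ)) (sum_card_compl m n)
    push_cast [hcast2] at this
    rw [hE, hc]
    convert this using 2
  rw [Finset.sum_sub_distrib, hSc]
  field_simp
  ring_nf
  nlinarith [hE2]
end

section
/- Let X_M = (X_1,...,X_m) be finite-valued random variables and λ a fractional partition with optimal value I(X_M) = H(X_M) − Σ_B λ_B H(X_B | X_{B^c}) ≥ 0, and assume the conditional version I(X_M | L) = H(X_M | L) − Σ_B λ_B H(X_B | X_{B^c}, L) ≥ 0 for a function L of X_M. Then H(L) ≥ Σ_B λ_B H(L | X_{B^c}) + I(X_M) − I(X_M | L); in particular, if additionally I(X_M | L) ≤ ε then H(L) ≥ I(X_M) − ε. -/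
open Finset Real

/-- The collection of nonempty proper subsets of `{1, …, m}`. -/
def properSubsets (m : ℕ) : Finset (Finset (Fin m)) :=
  Finset.univ.filter (fun B => B.Nonempty ∧ B ≠ Finset.univ)

lemma probOf_nonneg {Ω : Type*} [Fintype Ω] (p : Ω → ℝ) (hp0 : ∀ ω, 0 ≤ p ω)
    {α : Type*} [DecidableEq α] (X : Ω → α) (a : α) : 0 ≤ probOf p X a :=
  Finset.sum_nonneg fun ω _ => hp0 ω

/-- Entropy is invariant under composing with an injective map. -/
lemma shannonH_comp {Ω : Type*} [Fintype Ω] (p : Ω → ℝ) {α γ : Type*}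
    [Fintype α] [DecidableEq α] [Fintype γ] [DecidableEq γ]
    (Z : Ω → α) (h : α → γ) (hinj : Function.Injective h) :
    shannonH p (fun ω => h (Z ω)) = shannonH p Z := by
  have hprob : ∀ a, probOf p (fun ω => h (Z ω)) (h a) = probOf p Z a := by
    intro a
    unfold probOf
    congr 1
    ext ω
    simp [hinj.eq_iff]
  have hzero : ∀ c ∈ Finset.univ, c ∉ Finset.image h Finset.univ →
      probOf p (fun ω => h (Z ω)) c * Real.logb 2 (probOf p (fun ω => h (Z ω)) c) = 0 := by
    intro c _ hc
    have : Finset.univ.filter (fun ω => h (Z ω) = c) = ∅ := by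
      rw [Finset.filter_eq_empty_iff]
      intro ω _ hω
      exact hc (Finset.mem_image.mpr ⟨Z ω, Finset.mem_univ _, hω⟩)
    simp [probOf, this]
  unfold shannonH
  rw [← Finset.sum_subset (Finset.subset_univ (Finset.image h Finset.univ)) hzero,
    Finset.sum_image (fun a _ b _ hab => hinj hab)]
  simp_rw [hprob]

/-- Conditional entropy is nonnegative. -/
lemma condH_nonneg {Ω : Type*} [Fintype Ω] (p : Ω → ℝ) (hp0 : ∀ ω, 0 ≤ p ω)
    {α β : Type*} [Fintype α] [DecidableEq α] [Fintype β] [DecidableEq β]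
    (X : Ω → α) (Y : Ω → β) : 0 ≤ condH p X Y := by
  set q : α × β → ℝ := probOf p (fun ω => (X ω, Y ω)) with hqdef
  have hmarg : ∀ b, probOf p Y b = ∑ a, q (a, b) := by
    intro b
    have hq : ∀ a, q (a, b) = ∑ ω, if X ω = a ∧ Y ω = b then p ω else 0 := by
      intro a
      rw [hqdef]
      unfold probOf
      rw [Finset.sum_filter]
      exact Finset.sum_congr rfl fun ω _ => by simp [Prod.ext_iff]
    simp_rw [hq]
    rw [Finset.sum_comm]
    unfold probOf
    rw [Finset.sum_filter]
    apply Finset.sum_congr rfl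
    intro ω _
    by_cases hY : Y ω = b <;> simp [hY]
  have hqnn : ∀ c, 0 ≤ q c := fun c => probOf_nonneg p hp0 _ c
  have hle : ∀ a b, q (a, b) ≤ probOf p Y b := by
    intro a b
    unfold probOf
    apply Finset.sum_le_sum_of_subset_of_nonneg
    · intro ω hω
      simp only [Finset.mem_filter, Finset.mem_univ, true_and, Prod.ext_iff] at hω ⊢
      exact hω.2
    · exact fun ω _ _ => hp0 ω
  have hterm : ∀ a b, q (a, b) * Real.logb 2 (q (a, b)) ≤
      q (a, b) * Real.logb 2 (probOf p Y b) := by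
    intro a b
    rcases eq_or_lt_of_le (hqnn (a, b)) with h | h
    · rw [← h]; simp
    · exact mul_le_mul_of_nonneg_left
        (Real.logb_le_logb_of_le one_lt_two h (hle a b)) h.le
  unfold condH shannonH
  rw [← hqdef, Fintype.sum_prod_type]
  have hB : ∑ b, probOf p Y b * Real.logb 2 (probOf p Y b) =
      ∑ a, ∑ b, q (a, b) * Real.logb 2 (probOf p Y b) := by
    rw [Finset.sum_comm]
    apply Finset.sum_congr rfl
    intro b _
    rw [hmarg b, Finset.sum_mul]
  have := Finset.sum_le_sum (s := (Finset.univ : Finset α)) fun a _ =>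
    Finset.sum_le_sum (s := (Finset.univ : Finset β)) fun b _ => hterm a b
  linarith [this, hB.symm]

/-- Reconstruct a full tuple from its `B` and `Bᶜ` parts. -/
def recon {m : ℕ} {α : Fin m → Type*} (B : Finset (Fin m))
    (z : ((i : {x // x ∈ B}) → α i.1) × ((i : {x // x ∈ Bᶜ}) → α i.1)) (i : Fin m) : α i :=
  if h : i ∈ B then z.1 ⟨i, h⟩ else z.2 ⟨i, Finset.mem_compl.mpr h⟩

set_option maxHeartbeats 1000000 in
theorem stmt_17 {Ω : Type*} [Fintype Ω] (p : Ω → ℝ)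
    (hp0 : ∀ ω, 0 ≤ p ω) (hp1 : ∑ ω, p ω = 1)
    (m : ℕ) (α : Fin m → Type*) [∀ i, Fintype (α i)] [∀ i, DecidableEq (α i)]
    (X : (i : Fin m) → Ω → α i)
    {β : Type*} [Fintype β] [DecidableEq β] (L : Ω → β)
    (hL : ∃ f : ((i : Fin m) → α i) → β, ∀ ω, L ω = f (fun i => X i ω))
    (lam : Finset (Fin m) → ℝ)
    (hlam0 : ∀ B ∈ properSubsets m, 0 ≤ lam B)
    (hlam1 : ∀ i : Fin m, ∑ B ∈ (properSubsets m).filter (fun B => i ∈ B), lam B = 1)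
    (IXM IXML : ℝ)
    (hIXM : IXM = shannonH p (fun ω => (fun i => X i ω)) -
      ∑ B ∈ properSubsets m, lam B *
        condH p (fun ω => (fun i : {x // x ∈ B} => X i.1 ω))
          (fun ω => (fun i : {x // x ∈ Bᶜ} => X i.1 ω)))
    (hIXML : IXML = condH p (fun ω => (fun i => X i ω)) L -
      ∑ B ∈ properSubsets m, lam B *
        condH p (fun ω => (fun i : {x // x ∈ B} => X i.1 ω))
          (fun ω => ((fun i : {x // x ∈ Bᶜ} => X i.1 ω), L ω)))
    (hIXMnn : 0 ≤ IXM) (hIXMLnn : 0 ≤ IXML) :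
    (shannonH p L ≥
      (∑ B ∈ properSubsets m, lam B *
        condH p L (fun ω => (fun i : {x // x ∈ Bᶜ} => X i.1 ω))) + IXM - IXML) ∧
    (∀ ε : ℝ, IXML ≤ ε → shannonH p L ≥ IXM - ε) := by
  obtain ⟨f, hf⟩ := hL
  set XM : Ω → (i : Fin m) → α i := fun ω => (fun i => X i ω) with hXM
  -- H(X_M, L) = H(X_M)
  have hXL : shannonH p (fun ω => (XM ω, L ω)) = shannonH p XM := by
    have heq : (fun ω => (XM ω, L ω)) = fun ω => ((fun x => (x, f x)) (XM ω)) := by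
      funext ω; simp [hf ω]; rfl
    rw [heq]
    have hinj : Function.Injective (fun x : (i : Fin m) → α i => (x, f x)) :=
      fun a b hab => congrArg Prod.fst hab
    exact shannonH_comp p XM (fun x => (x, f x)) hinj
  have hcondXL : condH p XM L = shannonH p XM - shannonH p L := by
    unfold condH; rw [hXL]
  -- per-B identity
  have hdiff : ∀ B : Finset (Fin m),
      condH p (fun ω => (fun i : {x // x ∈ B} => X i.1 ω))
        (fun ω => (fun i : {x // x ∈ Bᶜ} => X i.1 ω)) -
      condH p (fun ω => (fun i : {x // x ∈ B} => X i.1 ω))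
        (fun ω => ((fun i : {x // x ∈ Bᶜ} => X i.1 ω), L ω)) =
      condH p L (fun ω => (fun i : {x // x ∈ Bᶜ} => X i.1 ω)) := by
    intro B
    set XB : Ω → ((i : {x // x ∈ B}) → α i.1) := fun ω => fun i => X i.1 ω with hXB
    set XBc : Ω → ((i : {x // x ∈ Bᶜ}) → α i.1) := fun ω => fun i => X i.1 ω with hXBc
    have hrecon : ∀ ω, recon B (XB ω, XBc ω) = XM ω := by
      intro ω
      funext i
      unfold recon
      split <;> rfl
    -- H(X_B, (X_{Bc}, L)) = H(X_B, X_{Bc})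
    have h1 : shannonH p (fun ω => (XB ω, (XBc ω, L ω))) =
        shannonH p (fun ω => (XB ω, XBc ω)) := by
      have heq : (fun ω => (XB ω, (XBc ω, L ω))) =
          fun ω => ((fun z => (z.1, (z.2, f (recon B z)))) ((XB ω, XBc ω))) := by
        funext ω
        simp only [hf ω, hrecon ω, hXM]
      rw [heq]
      have hinj : Function.Injective
          (fun z : ((i : {x // x ∈ B}) → α i.1) × ((i : {x // x ∈ Bᶜ}) → α i.1) =>
            (z.1, (z.2, f (recon B z)))) := by
        intro a b hab
        simp only [Prod.mk.injEq] at hab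
        exact Prod.ext hab.1 hab.2.1
      exact shannonH_comp p (fun ω => (XB ω, XBc ω))
        (fun z => (z.1, (z.2, f (recon B z)))) hinj
    -- H(X_{Bc}, L) = H(L, X_{Bc})
    have h2 : shannonH p (fun ω => (XBc ω, L ω)) =
        shannonH p (fun ω => (L ω, XBc ω)) := by
      have heq : (fun ω => (XBc ω, L ω)) =
          fun ω => (Prod.swap ((L ω, XBc ω))) := by funext ω; rfl
      rw [heq]
      exact shannonH_comp p (fun ω => (L ω, XBc ω)) Prod.swap Prod.swap_injective
    unfold condH
    rw [h1, h2]
    ring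
  -- key identity
  have hsum : (∑ B ∈ properSubsets m, lam B *
        condH p (fun ω => (fun i : {x // x ∈ B} => X i.1 ω))
          (fun ω => (fun i : {x // x ∈ Bᶜ} => X i.1 ω))) -
      (∑ B ∈ properSubsets m, lam B *
        condH p (fun ω => (fun i : {x // x ∈ B} => X i.1 ω))
          (fun ω => ((fun i : {x // x ∈ Bᶜ} => X i.1 ω), L ω))) =
      ∑ B ∈ properSubsets m, lam B *
        condH p L (fun ω => (fun i : {x // x ∈ Bᶜ} => X i.1 ω)) := by
    rw [← Finset.sum_sub_distrib]
    apply Finset.sum_congr rfl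
    intro B _
    rw [← mul_sub, hdiff B]
  have key : shannonH p L = (∑ B ∈ properSubsets m, lam B *
      condH p L (fun ω => (fun i : {x // x ∈ Bᶜ} => X i.1 ω))) + IXM - IXML := by
    rw [hIXM, hIXML, hcondXL]
    linarith [hsum]
  have hS : 0 ≤ ∑ B ∈ properSubsets m, lam B *
      condH p L (fun ω => (fun i : {x // x ∈ Bᶜ} => X i.1 ω)) :=
    Finset.sum_nonneg fun B hB => mul_nonneg (hlam0 B hB) (condH_nonneg p hp0 _ _)
  refine ⟨le_of_eq key.symm, fun ε hε => ?_⟩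
  linarith [key]
end

section
/- In the complete-graph PIN model on m ≥ 2 vertices with n repetitions, suppose L = Lξ is a linear function of the edge bits satisfying I(X_M^n | L) ≤ ε/(m−1)·n for some ε ≥ 0 (with I defined using the fractional partition λ̃ putting weight 1/(m−1) on each (m−1)-subset). Then rank(L) ≥ n·m(m−1)/2 − nε, i.e., H(L) ≥ n(C(m,2) − ε). -/
open Finset Real

/-! ### Auxiliary material -/

section Entropy

variable {Ω V : Type*} [Fintype Ω] [AddCommGroup Ω] [Module (ZMod 2) Ω]
  [Fintype V] [DecidableEq V] [AddCommGroup V] [Module (ZMod 2) V]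

set_option linter.unusedSectionVars false

lemma card_fiber_linmap (f : Ω →ₗ[ZMod 2] V) {a : V} (ha : a ∈ Set.range f) :
    (Finset.univ.filter (fun ω => f ω = a)).card
      = (Finset.univ.filter (fun ω => f ω = (0 : V))).card := by
  obtain ⟨ω₀, rfl⟩ := ha
  apply Finset.card_bij (fun ω _ => ω - ω₀)
  · intro ω hω
    simp only [Finset.mem_filter, Finset.mem_univ, true_and] at hω ⊢
    rw [map_sub, hω, sub_self]
  · intro a₁ h₁ a₂ h₂ h
    exact sub_left_injective h
  · intro κ hκ
    simp only [Finset.mem_filter, Finset.mem_univ, true_and] at hκ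
    exact ⟨κ + ω₀, by simp [map_add, hκ], by simp⟩

lemma card_univ_eq_image_mul (f : Ω →ₗ[ZMod 2] V) :
    Fintype.card Ω = (Finset.univ.image f).card
      * (Finset.univ.filter (fun ω => f ω = (0 : V))).card := by
  classical
  rw [← Finset.card_univ, Finset.card_eq_sum_card_image (⇑f) Finset.univ]
  rw [Finset.sum_congr rfl (fun a ha => card_fiber_linmap f ?_), Finset.sum_const,
    smul_eq_mul]
  rcases Finset.mem_image.mp ha with ⟨ω, _, rfl⟩
  exact ⟨ω, rfl⟩

lemma probOf_linmap (f : Ω →ₗ[ZMod 2] V) (a : V) :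
    probOf (fun _ => (Fintype.card Ω : ℝ)⁻¹) ⇑f a =
      if a ∈ Finset.univ.image f then ((Finset.univ.image f).card : ℝ)⁻¹ else 0 := by
  classical
  have hk0 : 0 < (Finset.univ.filter (fun ω => f ω = (0 : V))).card := by
    apply Finset.card_pos.mpr ⟨0, by simp⟩
  have hM0 : 0 < (Finset.univ.image f).card :=
    Finset.card_pos.mpr ⟨f 0, Finset.mem_image.mpr ⟨0, Finset.mem_univ _, rfl⟩⟩
  have hN := card_univ_eq_image_mul f
  rw [probOf, Finset.sum_const, nsmul_eq_mul]
  by_cases ha : a ∈ Finset.univ.image f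
  · rw [if_pos ha]
    rcases Finset.mem_image.mp ha with ⟨ω, _, rfl⟩
    rw [card_fiber_linmap f ⟨ω, rfl⟩]
    rw [hN]
    push_cast
    rw [mul_inv]
    field_simp
  · rw [if_neg ha]
    have : (Finset.univ.filter (fun ω => f ω = a)) = ∅ := by
      apply Finset.filter_false_of_mem
      intro ω _ h
      exact ha (Finset.mem_image.mpr ⟨ω, Finset.mem_univ _, h⟩)
    simp [this]

lemma shannonH_linmap (f : Ω →ₗ[ZMod 2] V) :
    shannonH (fun _ => (Fintype.card Ω : ℝ)⁻¹) ⇑f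
      = (Module.finrank (ZMod 2) (LinearMap.range f) : ℝ) := by
  classical
  have hM0 : 0 < (Finset.univ.image f).card :=
    Finset.card_pos.mpr ⟨f 0, Finset.mem_image.mpr ⟨0, Finset.mem_univ _, rfl⟩⟩
  set M : ℝ := ((Finset.univ.image f).card : ℝ) with hMdef
  have hM0' : (0:ℝ) < M := by rw [hMdef]; exact_mod_cast hM0
  have key : shannonH (fun _ => (Fintype.card Ω : ℝ)⁻¹) ⇑f = Real.logb 2 M := by
    rw [shannonH]
    have : ∀ a : V, probOf (fun _ => (Fintype.card Ω : ℝ)⁻¹) ⇑f a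
        * Real.logb 2 (probOf (fun _ => (Fintype.card Ω : ℝ)⁻¹) ⇑f a)
        = if a ∈ Finset.univ.image f then M⁻¹ * Real.logb 2 M⁻¹ else 0 := by
      intro a
      rw [probOf_linmap]
      by_cases ha : a ∈ Finset.univ.image f <;> simp [ha, hMdef]
    rw [Finset.sum_congr rfl (fun a _ => this a), Finset.sum_ite_mem,
      Finset.univ_inter, Finset.sum_const, nsmul_eq_mul, Real.logb_inv]
    rw [← hMdef]
    field_simp
  rw [key]
  have himg : (Finset.univ.image f) = (LinearMap.range f : Set V).toFinset := by
    ext x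
    simp [LinearMap.mem_range, Set.mem_toFinset, eq_comm]
  have hcard : (Finset.univ.image f).card = Fintype.card (LinearMap.range f) := by
    rw [himg, Set.toFinset_card]
    exact Fintype.card_congr (Equiv.refl _)
  have h2 : Fintype.card (LinearMap.range f)
      = 2 ^ Module.finrank (ZMod 2) (LinearMap.range f) := by
    have := Module.card_eq_pow_finrank (K := ZMod 2) (V := LinearMap.range f)
    simpa using this
  rw [hMdef, hcard, h2]
  push_cast
  rw [Real.logb_pow, Real.logb_self_eq_one (by norm_num), mul_one]

lemma shannonH_irrel {Ω : Type*} [Fintype Ω] (p : Ω → ℝ) {α : Type*} (i1 i2 : Fintype α)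
    (d1 d2 : DecidableEq α) (X : Ω → α) :
    @shannonH Ω _ p α i1 d1 X = @shannonH Ω _ p α i2 d2 X := by
  cases Subsingleton.elim i1 i2
  cases Subsingleton.elim d1 d2
  rfl

end Entropy

section PinSetup

variable (m n : ℕ)

/-- `pinX` as a linear map. -/
def XiL (i : Fin m) :
    PinOmega m n →ₗ[ZMod 2] ({e : EdgeIdx m n // i ∈ (e.2.1 : Sym2 (Fin m))} → ZMod 2) :=
  LinearMap.funLeft (ZMod 2) (ZMod 2) (fun e => e.1)

/-- `pinXM` as a linear map. -/
def XML : PinOmega m n →ₗ[ZMod 2]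
    ((i : Fin m) → ({e : EdgeIdx m n // i ∈ (e.2.1 : Sym2 (Fin m))} → ZMod 2)) :=
  LinearMap.pi (fun i => XiL m n i)

/-- `pinXRest` as a linear map. -/
def XRestL (i : Fin m) : PinOmega m n →ₗ[ZMod 2]
    ((j : {j : Fin m // j ≠ i}) →
      ({e : EdgeIdx m n // (j : Fin m) ∈ (e.2.1 : Sym2 (Fin m))} → ZMod 2)) :=
  LinearMap.pi (fun j => XiL m n j.1)

lemma shannonH_pin_linmap {V : Type*} [Fintype V] [DecidableEq V] [AddCommGroup V]
    [Module (ZMod 2) V] (f : PinOmega m n →ₗ[ZMod 2] V) (X : PinOmega m n → V)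
    (hX : X = ⇑f) :
    shannonH (pinUnif m n) X = (Module.finrank (ZMod 2) (LinearMap.range f) : ℝ) := by
  rw [hX]
  exact shannonH_linmap f

lemma finrank_pin : Module.finrank (ZMod 2) (PinOmega m n) = Fintype.card (EdgeIdx m n) :=
  Module.finrank_fintype_fun_eq_card _

lemma sym2_filter_card {s : Sym2 (Fin m)} (hs : ¬ s.IsDiag) :
    (Finset.univ.filter (fun i : Fin m => i ∈ s)).card = 2 := by
  revert hs
  induction s using Sym2.ind with
  | _ u v =>
    intro hs
    rw [Sym2.mk_isDiag_iff] at hs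
    have huniv : Finset.univ.filter (fun i : Fin m => i ∈ s(u, v)) = {u, v} := by
      ext i
      simp [Sym2.mem_iff]
    rw [huniv, Finset.card_pair hs]

lemma sum_card_Ei :
    ∑ i : Fin m, Fintype.card {e : EdgeIdx m n // i ∈ (e.2.1 : Sym2 (Fin m))}
      = 2 * Fintype.card (EdgeIdx m n) := by
  classical
  have h1 : ∀ i : Fin m, Fintype.card {e : EdgeIdx m n // i ∈ (e.2.1 : Sym2 (Fin m))}
      = (Finset.univ.filter (fun e : EdgeIdx m n => i ∈ (e.2.1 : Sym2 (Fin m)))).card :=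
    fun i => Fintype.card_subtype _
  rw [Finset.sum_congr rfl (fun i _ => h1 i)]
  have h2 : ∀ i : Fin m,
      (Finset.univ.filter (fun e : EdgeIdx m n => i ∈ (e.2.1 : Sym2 (Fin m)))).card
      = ∑ e : EdgeIdx m n, if i ∈ (e.2.1 : Sym2 (Fin m)) then 1 else 0 :=
    fun i => Finset.card_filter _ _
  rw [Finset.sum_congr rfl (fun i _ => h2 i), Finset.sum_comm]
  have h3 : ∀ e : EdgeIdx m n,
      (∑ i : Fin m, if i ∈ (e.2.1 : Sym2 (Fin m)) then 1 else 0) = 2 := by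
    intro e
    rw [← Finset.card_filter]
    exact sym2_filter_card m e.2.2
  rw [Finset.sum_congr rfl (fun e _ => h3 e), Finset.sum_const, smul_eq_mul,
    Finset.card_univ, mul_comm]

end PinSetup

set_option maxHeartbeats 2000000 in
theorem stmt_18 (m n q : ℕ) (hm : 2 ≤ m)
    (L : Matrix (Fin q) (EdgeIdx m n) (ZMod 2)) (ε : ℝ) (hε : 0 ≤ ε)
    (hI : condH (pinUnif m n) (pinXM m n) (fun ω => L.mulVec ω) -
        (1 / (m - 1)) * ∑ i : Fin m,
          condH (pinUnif m n) (pinXRest m n i)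
            (fun ω => (pinX m n i ω, L.mulVec ω))
      ≤ ε / (m - 1) * n) :
    (L.rank : ℝ) ≥ n * m * (m - 1) / 2 - n * ε ∧
    shannonH (pinUnif m n) (fun ω => L.mulVec ω) ≥ n * (m * (m - 1) / 2 - ε) := by
  classical
  set E : ℕ := Fintype.card (EdgeIdx m n) with hE
  let ℒ : PinOmega m n →ₗ[ZMod 2] (Fin q → ZMod 2) := Matrix.mulVecLin L
  let T := fun i : Fin m => (XiL m n i).prod ℒ
  let d : Fin m → ℕ := fun i => Module.finrank (ZMod 2) (LinearMap.range (T i))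
  -- entropy of L
  have hHL : shannonH (pinUnif m n) (fun ω => L.mulVec ω) = (L.rank : ℝ) := by
    have h := shannonH_pin_linmap m n ℒ (fun ω => L.mulVec ω) rfl
    rw [h]
    rfl
  -- injectivity of the full observation maps
  have hXMinj : Function.Injective ⇑((XML m n).prod ℒ) := by
    intro ω₁ ω₂ h
    have h1 : XML m n ω₁ = XML m n ω₂ := congrArg Prod.fst h
    funext e
    have hmem : (e.2.1 : Sym2 (Fin m)).out.1 ∈ (e.2.1 : Sym2 (Fin m)) :=
      Sym2.out_fst_mem _
    exact congrFun (congrFun h1 ((e.2.1 : Sym2 (Fin m)).out.1)) ⟨e, hmem⟩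
  have htripinj : ∀ i : Fin m,
      Function.Injective ⇑((XRestL m n i).prod (T i)) := by
    intro i ω₁ ω₂ h
    have hrest : XRestL m n i ω₁ = XRestL m n i ω₂ := congrArg Prod.fst h
    have hXi : XiL m n i ω₁ = XiL m n i ω₂ :=
      congrArg Prod.fst (congrArg Prod.snd h)
    funext e
    by_cases hie : i ∈ (e.2.1 : Sym2 (Fin m))
    · exact congrFun hXi ⟨e, hie⟩
    · have hj : (e.2.1 : Sym2 (Fin m)).out.1 ∈ (e.2.1 : Sym2 (Fin m)) :=
        Sym2.out_fst_mem _
      have hne : (e.2.1 : Sym2 (Fin m)).out.1 ≠ i := by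
        intro hcontra
        exact hie (hcontra ▸ hj)
      exact congrFun (congrFun hrest ⟨(e.2.1 : Sym2 (Fin m)).out.1, hne⟩) ⟨e, hj⟩
  -- conditional entropy identities
  have hc1 : condH (pinUnif m n) (pinXM m n) (fun ω => L.mulVec ω)
      = (E : ℝ) - (L.rank : ℝ) := by
    rw [condH]
    have h1 : shannonH (pinUnif m n) (fun ω => (pinXM m n ω, L.mulVec ω)) = (E : ℝ) := by
      rw [shannonH_pin_linmap m n ((XML m n).prod ℒ)
          (fun ω => (pinXM m n ω, L.mulVec ω)) rfl,
        LinearMap.finrank_range_of_inj hXMinj, finrank_pin]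
    rw [h1, hHL]
  have hc2 : ∀ i : Fin m,
      condH (pinUnif m n) (pinXRest m n i) (fun ω => (pinX m n i ω, L.mulVec ω))
      = (E : ℝ) - (d i : ℝ) := by
    intro i
    rw [condH]
    beta_reduce
    have h1 : shannonH (pinUnif m n)
        (fun ω => (pinXRest m n i ω, (pinX m n i ω, L.mulVec ω))) = (E : ℝ) := by
      rw [shannonH_pin_linmap m n ((XRestL m n i).prod (T i))
          (fun ω => (pinXRest m n i ω, (pinX m n i ω, L.mulVec ω))) rfl,
        LinearMap.finrank_range_of_inj (htripinj i), finrank_pin]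
    have h2 : shannonH (pinUnif m n) (fun ω => (pinX m n i ω, L.mulVec ω))
        = (d i : ℝ) := shannonH_pin_linmap m n (T i)
          (fun ω => (pinX m n i ω, L.mulVec ω)) rfl
    rw [h2]
    exact sub_left_inj.mpr ((shannonH_irrel (pinUnif m n) _ _ _ _ _).trans h1)
  -- columns of L
  let cols : EdgeIdx m n → (Fin q → ZMod 2) := fun e => ℒ (Pi.single e 1)
  have hspan : Submodule.span (ZMod 2) (Set.range cols) = LinearMap.range ℒ := by
    apply le_antisymm
    · rw [Submodule.span_le]
      rintro _ ⟨e, rfl⟩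
      exact ⟨Pi.single e 1, rfl⟩
    · rintro x ⟨ω, rfl⟩
      have hω : ω = ∑ e : EdgeIdx m n, Pi.single e (ω e) := (Finset.univ_sum_single ω).symm
      rw [hω]
      erw [map_sum ℒ]
      apply Submodule.sum_mem
      intro e _
      have hsingle : Pi.single e (ω e) = (ω e) • (Pi.single e (1 : ZMod 2) : EdgeIdx m n → ZMod 2) := by
        rw [← Pi.single_smul, smul_eq_mul, mul_one]
      rw [hsingle]
      erw [map_smul ℒ]
      exact Submodule.smul_mem _ _ (Submodule.subset_span ⟨e, rfl⟩)
  obtain ⟨b, hb_sub, hb_span, hb_ind⟩ := exists_linearIndependent (ZMod 2) (Set.range cols)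
  haveI : Fintype ↥b := Fintype.ofFinite _
  have hb_card : Fintype.card ↥b = L.rank := by
    have h1 : Module.finrank (ZMod 2) (Submodule.span (ZMod 2) b) = b.toFinset.card :=
      finrank_span_set_eq_card hb_ind
    rw [hb_span, hspan, Set.toFinset_card] at h1
    exact h1.symm
  choose eOf heOf using fun x : ↥b => hb_sub x.2
  -- the per-vertex dimension bound
  have hd_ge : ∀ i : Fin m,
      Fintype.card {e : EdgeIdx m n // i ∈ (e.2.1 : Sym2 (Fin m))}
        + (Finset.univ.filter
            (fun x : ↥b => ¬ i ∈ ((eOf x).2.1 : Sym2 (Fin m)))).card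
      ≤ d i := by
    intro i
    let ι := {e : EdgeIdx m n // i ∈ (e.2.1 : Sym2 (Fin m))}
        ⊕ {x : ↥b // ¬ i ∈ ((eOf x).2.1 : Sym2 (Fin m))}
    let u : ι → EdgeIdx m n := Sum.elim (fun e => e.1) (fun x => eOf x.1)
    let v : ι → _ := fun j => (T i) (Pi.single (u j) 1)
    have hv : LinearIndependent (ZMod 2) v := by
      rw [Fintype.linearIndependent_iff]
      intro g hg
      set w : PinOmega m n := ∑ j : ι, g j • Pi.single (u j) (1 : ZMod 2) with hw
      have hTw : (T i) w = 0 := by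
        rw [hw, map_sum]
        refine (Finset.sum_congr rfl fun j _ => ?_).trans hg
        exact (T i).map_smul _ _
      have hXi : XiL m n i w = 0 := congrArg Prod.fst hTw
      have hL0 : ℒ w = 0 := congrArg Prod.snd hTw
      have hinl : ∀ e₀ : {e : EdgeIdx m n // i ∈ (e.2.1 : Sym2 (Fin m))},
          g (Sum.inl e₀) = 0 := by
        intro e₀
        have h0 : w e₀.1 = 0 := congrFun hXi e₀
        rw [hw] at h0
        erw [Finset.sum_apply] at h0
        have hterm : ∀ j : ι, (g j • (Pi.single (u j) (1 : ZMod 2) : PinOmega m n)) e₀.1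
            = if e₀.1 = u j then g j else 0 := by
          intro j
          rw [Pi.smul_apply, Pi.single_apply]
          by_cases h : e₀.1 = u j <;> simp [h]
        erw [Finset.sum_congr rfl (fun j _ => hterm j)] at h0
        rw [Finset.sum_eq_single (Sum.inl e₀)] at h0
        · simp at h0
          exact h0 rfl
        · intro j _ hj
          rw [if_neg]
          intro hcontra
          match j with
          | Sum.inl e =>
            exact hj (congrArg Sum.inl (Subtype.ext hcontra.symm))
          | Sum.inr x =>
            have hux : (e₀ : EdgeIdx m n) = eOf x.1 := hcontra
            exact x.2 (hux ▸ e₀.2)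
        · intro habs
          exact absurd (Finset.mem_univ _) habs
      have hsum2 : ∑ x : {x : ↥b // ¬ i ∈ ((eOf x).2.1 : Sym2 (Fin m))},
          g (Sum.inr x) • ((x : ↥b) : Fin q → ZMod 2) = 0 := by
        have h2 : ℒ w = ∑ j : ι, g j • cols (u j) := by
          rw [hw, map_sum]
          exact Finset.sum_congr rfl (fun j _ => ℒ.map_smul _ _)
        rw [h2, Fintype.sum_sum_type] at hL0
        have hz : (∑ e₀ : {e : EdgeIdx m n // i ∈ (e.2.1 : Sym2 (Fin m))},
            g (Sum.inl e₀) • cols (u (Sum.inl e₀))) = 0 := by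
          apply Finset.sum_eq_zero
          intro e₀ _
          rw [hinl e₀, zero_smul]
        rw [hz, zero_add] at hL0
        calc ∑ x : {x : ↥b // ¬ i ∈ ((eOf x).2.1 : Sym2 (Fin m))},
              g (Sum.inr x) • ((x : ↥b) : Fin q → ZMod 2)
            = ∑ x : {x : ↥b // ¬ i ∈ ((eOf x).2.1 : Sym2 (Fin m))},
              g (Sum.inr x) • cols (u (Sum.inr x)) := by
              apply Finset.sum_congr rfl
              intro x _
              rw [← heOf x.1]
              rfl
          _ = 0 := hL0
      have hb_ind' : LinearIndependent (ZMod 2)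
          (fun x : {x : ↥b // ¬ i ∈ ((eOf x).2.1 : Sym2 (Fin m))} =>
            ((x : ↥b) : Fin q → ZMod 2)) :=
        hb_ind.comp (fun x : {x : ↥b // ¬ i ∈ ((eOf x).2.1 : Sym2 (Fin m))} => x.1) Subtype.val_injective
      have hg2 := Fintype.linearIndependent_iff.mp hb_ind'
        (fun x => g (Sum.inr x)) hsum2
      intro j
      match j with
      | Sum.inl e₀ => exact hinl e₀
      | Sum.inr x => exact hg2 x
    have hv' : LinearIndependent (ZMod 2)
        (fun j : ι => (⟨v j, LinearMap.mem_range_self _ _⟩ :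
          ↥(LinearMap.range (T i)))) := by
      apply LinearIndependent.of_comp (LinearMap.range (T i)).subtype
      exact hv
    have hcard := hv'.fintype_card_le_finrank
    have hcardι : Fintype.card ι
        = Fintype.card {e : EdgeIdx m n // i ∈ (e.2.1 : Sym2 (Fin m))}
          + (Finset.univ.filter
              (fun x : ↥b => ¬ i ∈ ((eOf x).2.1 : Sym2 (Fin m)))).card := by
      rw [Fintype.card_sum]
      congr 1
      exact Fintype.card_subtype _
    rw [hcardι] at hcard
    exact hcard
  -- summing the bounds
  have hsum_filter : ∑ i : Fin m, (Finset.univ.filter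
      (fun x : ↥b => ¬ i ∈ ((eOf x).2.1 : Sym2 (Fin m)))).card
      = (m - 2) * L.rank := by
    have h1 : ∀ i : Fin m, (Finset.univ.filter
        (fun x : ↥b => ¬ i ∈ ((eOf x).2.1 : Sym2 (Fin m)))).card
        = ∑ x : ↥b, if ¬ i ∈ ((eOf x).2.1 : Sym2 (Fin m)) then 1 else 0 :=
      fun i => Finset.card_filter _ _
    rw [Finset.sum_congr rfl (fun i _ => h1 i), Finset.sum_comm]
    have h2 : ∀ x : ↥b,
        (∑ i : Fin m, if ¬ i ∈ ((eOf x).2.1 : Sym2 (Fin m)) then 1 else 0) = m - 2 := by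
      intro x
      rw [← Finset.card_filter]
      rw [Finset.filter_not, Finset.card_sdiff_of_subset (Finset.filter_subset _ _),
        sym2_filter_card m (eOf x).2.2, Finset.card_univ, Fintype.card_fin]
    rw [Finset.sum_congr rfl (fun x _ => h2 x), Finset.sum_const, smul_eq_mul,
      Finset.card_univ, hb_card, mul_comm]
  have hsumd : 2 * E + (m - 2) * L.rank ≤ ∑ i : Fin m, d i := by
    have heq : 2 * E + (m - 2) * L.rank
        = ∑ i : Fin m, (Fintype.card {e : EdgeIdx m n // i ∈ (e.2.1 : Sym2 (Fin m))}
            + (Finset.univ.filter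
                (fun x : ↥b => ¬ i ∈ ((eOf x).2.1 : Sym2 (Fin m)))).card) := by
      rw [Finset.sum_add_distrib, sum_card_Ei m n, hsum_filter, hE]
    rw [heq]
    exact Finset.sum_le_sum (fun i _ => hd_ge i)
  -- real arithmetic
  have hm2 : (2:ℝ) ≤ (m:ℝ) := by exact_mod_cast hm
  have hμ : (0:ℝ) < (m:ℝ) - 1 := by linarith
  have hIr : (((E:ℝ) - (L.rank:ℝ)) - (1/((m:ℝ)-1)) * ∑ i : Fin m, ((E:ℝ) - (d i:ℝ)))
      ≤ ε/((m:ℝ)-1) * n := by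
    have hs : (∑ i : Fin m, condH (pinUnif m n) (pinXRest m n i)
        (fun ω => (pinX m n i ω, L.mulVec ω)))
        = ∑ i : Fin m, ((E:ℝ) - (d i:ℝ)) :=
      Finset.sum_congr rfl (fun i _ => hc2 i)
    rw [hc1, hs] at hI
    exact hI
  have hDr : 2*(E:ℝ) + ((m:ℝ)-2) * (L.rank:ℝ) ≤ ∑ i : Fin m, (d i : ℝ) := by
    have h2 : ((2 * E + (m - 2) * L.rank : ℕ) : ℝ) ≤ ((∑ i : Fin m, d i : ℕ) : ℝ) := by
      exact_mod_cast hsumd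
    push_cast [Nat.cast_sub hm] at h2
    exact h2
  have hSsum : (∑ i : Fin m, ((E:ℝ) - (d i:ℝ)))
      = (m:ℝ) * (E:ℝ) - ∑ i : Fin m, (d i:ℝ) := by
    rw [Finset.sum_sub_distrib, Finset.sum_const, Finset.card_univ, Fintype.card_fin,
      nsmul_eq_mul]
  have hkey : (E:ℝ) - ε * n ≤ (L.rank : ℝ) := by
    rw [hSsum] at hIr
    have hmul := mul_le_mul_of_nonneg_left hIr hμ.le
    have hexp : ((m:ℝ)-1) * ((((E:ℝ) - (L.rank:ℝ))
          - (1/((m:ℝ)-1)) * ((m:ℝ) * (E:ℝ) - ∑ i : Fin m, (d i:ℝ))))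
        = ((m:ℝ)-1) * ((E:ℝ) - (L.rank:ℝ))
          - ((m:ℝ) * (E:ℝ) - ∑ i : Fin m, (d i:ℝ)) := by
      have hne : ((m:ℝ)-1) ≠ 0 := ne_of_gt hμ
      field_simp
    have hexp2 : ((m:ℝ)-1) * (ε/((m:ℝ)-1) * n) = ε * n := by
      have hne : ((m:ℝ)-1) ≠ 0 := ne_of_gt hμ
      field_simp
    rw [hexp, hexp2] at hmul
    nlinarith [hDr, hmul]
  have hEval : (E:ℝ) = n * ((m:ℝ) * ((m:ℝ)-1) / 2) := by
    have h1 : E = n * Nat.choose m 2 := by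
      rw [hE]
      rw [show Fintype.card (EdgeIdx m n)
        = Fintype.card (Fin n) * Fintype.card {e : Sym2 (Fin m) // ¬ e.IsDiag}
        from Fintype.card_prod _ _]
      rw [Fintype.card_fin, Sym2.card_subtype_not_diag, Fintype.card_fin]
    rw [h1]
    push_cast [Nat.cast_choose_two]
    ring
  constructor
  · have hring : (n:ℝ) * ((m:ℝ) * ((m:ℝ)-1)/2) = (n:ℝ) * (m:ℝ) * ((m:ℝ)-1)/2 := by ring
    linarith [hkey]
  · rw [hHL]
    have hring : (n:ℝ) * ((m:ℝ) * ((m:ℝ)-1)/2 - ε)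
        = (n:ℝ) * ((m:ℝ) * ((m:ℝ)-1)/2) - ε * n := by ring
    linarith [hkey]
end
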